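/- Let f, σ, τ be as in the context, let α_1, α_2 ∈ (0,1) with α_1 ≠ α_2, and let ρ_{1,0}, ρ_{2,0}, ρ_{3,0}, ρ_{4,0} ∈ [0,1]. Consider the set D of all tuples (u_1,u_2,u_3,u_4) ∈ [0,1]^4 such that: for i = 1,2, u_i ∈ {ρ_{i,0}} ∪ (τ(ρ_{i,0}),1] if 0 ≤ ρ_{i,0} ≤ σ and u_i ∈ [σ,1] if σ ≤ ρ_{i,0} ≤ 1; for j = 3,4, u_j ∈ [0,σ] if 0 ≤ ρ_{j,0} ≤ σ and u_j ∈ {ρ_{j,0}} ∪ [0,τ(ρ_{j,0})) if σ ≤ ρ_{j,0} ≤ 1; and f(u_3) = α_1 f(u_1) + α_2 f(u_2), f(u_4) = (1−α_1) f(u_1) + (1−α_2) f(u_2). Then there exists exactly one tuple (ρ̂_1,ρ̂_2,ρ̂_3,ρ̂_4) ∈ D maximizing f(u_1) + f(u_2) + f(u_3) + f(u_4) over D. -/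

import Mathlib

open Set


lemma stmt4_fltσ (f : ℝ → ℝ) (σ : ℝ) (hf_conc : StrictConcaveOn ℝ (Icc 0 1) f)
    (hσ : σ ∈ Ioo (0:ℝ) 1) (hσmax : ∀ x ∈ Icc (0:ℝ) 1, f x ≤ f σ) :
    ∀ x ∈ Icc (0:ℝ) 1, x ≠ σ → f x < f σ := by
  intro x hx hne
  have hσ1 : σ ∈ Icc (0:ℝ) 1 := ⟨hσ.1.le, hσ.2.le⟩
  have h := hf_conc.2 hx hσ1 hne (by norm_num : (0:ℝ) < 1/2) (by norm_num : (0:ℝ) < 1/2)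
    (by norm_num)
  simp only [smul_eq_mul] at h
  have hm : (1:ℝ)/2 * x + 1/2 * σ ∈ Icc (0:ℝ) 1 := by
    constructor <;> [nlinarith [hx.1, hσ1.1]; nlinarith [hx.2, hσ1.2]]
  have := hσmax _ hm
  linarith

lemma stmt4_mono (f : ℝ → ℝ) (σ : ℝ) (hf_conc : StrictConcaveOn ℝ (Icc 0 1) f)
    (hσ : σ ∈ Ioo (0:ℝ) 1) (hσmax : ∀ x ∈ Icc (0:ℝ) 1, f x ≤ f σ) :
    StrictMonoOn f (Icc 0 σ) := by
  intro x hx y hy hxy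
  have hσ1 : σ ∈ Icc (0:ℝ) 1 := ⟨hσ.1.le, hσ.2.le⟩
  have hx1 : x ∈ Icc (0:ℝ) 1 := ⟨hx.1, hx.2.trans hσ.2.le⟩
  rcases eq_or_lt_of_le hy.2 with h | h
  · rw [h]
    exact stmt4_fltσ f σ hf_conc hσ hσmax x hx1 ((hxy.trans_le hy.2).ne)
  · have hσx : 0 < σ - x := by linarith [hy.1]
    set a := (σ - y)/(σ - x) with ha
    set b := (y - x)/(σ - x) with hb
    have hapos : 0 < a := div_pos (by linarith) hσx
    have hbpos : 0 < b := div_pos (by linarith) hσx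
    have hab : a + b = 1 := by
      rw [ha, hb, ← add_div, show σ - y + (y - x) = σ - x by ring, div_self hσx.ne']
    have hc := hf_conc.2 hx1 hσ1 ((hxy.trans h).ne) hapos hbpos hab
    simp only [smul_eq_mul] at hc
    have he : a * x + b * σ = y := by rw [ha, hb]; field_simp; ring
    rw [he] at hc
    have hfx : f x ≤ f σ := hσmax x hx1
    have h1 : a * f x + b * f x ≤ a * f x + b * f σ := by nlinarith
    have h2 : a * f x + b * f x = f x := by rw [← add_mul, hab, one_mul]
    linarith

lemma stmt4_anti (f : ℝ → ℝ) (σ : ℝ) (hf_conc : StrictConcaveOn ℝ (Icc 0 1) f)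
    (hσ : σ ∈ Ioo (0:ℝ) 1) (hσmax : ∀ x ∈ Icc (0:ℝ) 1, f x ≤ f σ) :
    StrictAntiOn f (Icc σ 1) := by
  intro x hx y hy hxy
  have hσ1 : σ ∈ Icc (0:ℝ) 1 := ⟨hσ.1.le, hσ.2.le⟩
  have hy1 : y ∈ Icc (0:ℝ) 1 := ⟨hσ.1.le.trans hy.1, hy.2⟩
  rcases eq_or_lt_of_le hx.1 with h | h
  · rw [← h]
    exact stmt4_fltσ f σ hf_conc hσ hσmax y hy1 ((h.trans_lt hxy).ne')
  · have hyσ : 0 < y - σ := by linarith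
    set a := (y - x)/(y - σ) with ha
    set b := (x - σ)/(y - σ) with hb
    have hapos : 0 < a := div_pos (by linarith) hyσ
    have hbpos : 0 < b := div_pos (by linarith) hyσ
    have hab : a + b = 1 := by
      rw [ha, hb, ← add_div, show y - x + (x - σ) = y - σ by ring, div_self hyσ.ne']
    have hc := hf_conc.2 hσ1 hy1 ((h.trans hxy).ne) hapos hbpos hab
    simp only [smul_eq_mul] at hc
    have he : a * σ + b * y = x := by rw [ha, hb]; field_simp; ring
    rw [he] at hc
    have hfy : f y ≤ f σ := hσmax y hy1
    have h1 : a * f y + b * f y ≤ a * f σ + b * f y := by nlinarith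
    have h2 : a * f y + b * f y = f y := by rw [← add_mul, hab, one_mul]
    linarith


lemma stmt4_nonneg (f : ℝ → ℝ) (hf_conc : StrictConcaveOn ℝ (Icc 0 1) f)
    (hf0 : f 0 = 0) (hf1 : f 1 = 0) : ∀ x ∈ Icc (0:ℝ) 1, 0 ≤ f x := by
  intro x hx
  rcases eq_or_lt_of_le hx.1 with h0 | h0
  · rw [← h0, hf0]
  rcases eq_or_lt_of_le hx.2 with h1 | h1
  · rw [h1, hf1]
  have h := hf_conc.2 (by simp : (0:ℝ) ∈ Icc (0:ℝ) 1) (by simp : (1:ℝ) ∈ Icc (0:ℝ) 1)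
    (by norm_num) (by linarith : (0:ℝ) < 1 - x) h0 (by ring)
  simp only [smul_eq_mul] at h
  have e : (1 - x) * 0 + x * 1 = x := by ring
  rw [e, hf0, hf1] at h
  linarith

section
variable (f : ℝ → ℝ) (σ : ℝ) (τ : ℝ → ℝ)
  (hf_cont : ContinuousOn f (Icc 0 1))
  (hf_conc : StrictConcaveOn ℝ (Icc 0 1) f)
  (hf0 : f 0 = 0) (hf1 : f 1 = 0)
  (hσ : σ ∈ Ioo (0 : ℝ) 1)
  (hσmax : ∀ x ∈ Icc (0 : ℝ) 1, f x ≤ f σ)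
  (hτσ : τ σ = σ)
  (hτ : ∀ ρ ∈ Icc (0 : ℝ) 1, ρ ≠ σ →
    τ ρ ∈ Icc (0 : ℝ) 1 ∧ τ ρ ≠ ρ ∧ f (τ ρ) = f ρ)

include hf_conc hσ hσmax hτ in
lemma stmt4_tau_gt (ρ : ℝ) (hρ0 : 0 ≤ ρ) (hρ : ρ < σ) :
    σ < τ ρ ∧ τ ρ ≤ 1 ∧ f (τ ρ) = f ρ := by
  obtain ⟨hmem, hne, hfe⟩ := hτ ρ ⟨hρ0, hρ.le.trans hσ.2.le⟩ hρ.ne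
  refine ⟨?_, hmem.2, hfe⟩
  by_contra hle
  push_neg at hle
  rcases eq_or_lt_of_le hle with h | h
  · rw [h] at hfe
    exact absurd hfe ((stmt4_fltσ f σ hf_conc hσ hσmax ρ ⟨hρ0, hρ.le.trans hσ.2.le⟩ hρ.ne).ne')
  · exact hne ((stmt4_mono f σ hf_conc hσ hσmax).injOn ⟨hmem.1, hle⟩ ⟨hρ0, hρ.le⟩ hfe)

include hf_conc hσ hσmax hτ in
lemma stmt4_tau_lt (ρ : ℝ) (hρ1 : ρ ≤ 1) (hρ : σ < ρ) :
    0 ≤ τ ρ ∧ τ ρ < σ ∧ f (τ ρ) = f ρ := by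
  obtain ⟨hmem, hne, hfe⟩ := hτ ρ ⟨hσ.1.le.trans hρ.le, hρ1⟩ hρ.ne'
  refine ⟨hmem.1, ?_, hfe⟩
  by_contra hle
  push_neg at hle
  rcases eq_or_lt_of_le hle with h | h
  · rw [← h] at hfe
    exact absurd hfe ((stmt4_fltσ f σ hf_conc hσ hσmax ρ ⟨hσ.1.le.trans hρ.le, hρ1⟩ hρ.ne').ne')
  · exact hne ((stmt4_anti f σ hf_conc hσ hσmax).injOn ⟨hle, hmem.2⟩ ⟨hρ.le, hρ1⟩ hfe)

include hf_conc hf0 hf1 hσ hσmax hτσ hτ in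
lemma stmt4_inc_bound (ρ₀ : ℝ) (hρ₀ : ρ₀ ∈ Icc (0:ℝ) 1)
    (u : ℝ) (hu : u ∈ Icc (0:ℝ) 1)
    (h1 : ρ₀ ≤ σ → u ∈ insert ρ₀ (Ioc (τ ρ₀) 1))
    (h2 : σ ≤ ρ₀ → u ∈ Icc σ 1) :
    0 ≤ f u ∧ f u ≤ (if ρ₀ ≤ σ then f ρ₀ else f σ) := by
  have hanti := stmt4_anti f σ hf_conc hσ hσmax
  refine ⟨stmt4_nonneg f hf_conc hf0 hf1 u hu, ?_⟩
  split_ifs with hle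
  · rcases mem_insert_iff.1 (h1 hle) with h | h
    · rw [h]
    rcases eq_or_lt_of_le hle with heq | hlt
    · subst heq
      rw [hτσ] at h
      exact (hanti ⟨le_refl _, hρ₀.2⟩ ⟨h.1.le, h.2⟩ h.1).le
    · obtain ⟨hg, hl1, hfe⟩ := stmt4_tau_gt f σ τ hf_conc hσ hσmax hτ ρ₀ hρ₀.1 hlt
      calc f u ≤ f (τ ρ₀) := (hanti ⟨hg.le, hl1⟩ ⟨hg.le.trans h.1.le, h.2⟩ h.1).le
        _ = f ρ₀ := hfe
  · exact hσmax u hu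

include hf_conc hf0 hf1 hσ hσmax hτσ hτ in
lemma stmt4_out_bound (ρ₀ : ℝ) (hρ₀ : ρ₀ ∈ Icc (0:ℝ) 1)
    (u : ℝ) (hu : u ∈ Icc (0:ℝ) 1)
    (h1 : ρ₀ ≤ σ → u ∈ Icc 0 σ)
    (h2 : σ ≤ ρ₀ → u ∈ insert ρ₀ (Ico 0 (τ ρ₀))) :
    0 ≤ f u ∧ f u ≤ (if σ ≤ ρ₀ then f ρ₀ else f σ) := by
  have hmono := stmt4_mono f σ hf_conc hσ hσmax
  refine ⟨stmt4_nonneg f hf_conc hf0 hf1 u hu, ?_⟩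
  split_ifs with hle
  · rcases mem_insert_iff.1 (h2 hle) with h | h
    · rw [h]
    rcases eq_or_lt_of_le hle with heq | hlt
    · subst heq
      rw [hτσ] at h
      exact (hmono ⟨h.1, h.2.le⟩ ⟨hσ.1.le, le_refl _⟩ h.2).le
    · obtain ⟨hg, hl1, hfe⟩ := stmt4_tau_lt f σ τ hf_conc hσ hσmax hτ ρ₀ hρ₀.2 hlt
      calc f u ≤ f (τ ρ₀) := (hmono ⟨h.1, h.2.le.trans hl1.le⟩ ⟨hg, hl1.le⟩ h.2).le
        _ = f ρ₀ := hfe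
  · exact hσmax u hu

include hf_cont hf_conc hf0 hf1 hσ hσmax hτσ hτ in
lemma stmt4_inc_exu (ρ₀ : ℝ) (hρ₀ : ρ₀ ∈ Icc (0:ℝ) 1)
    (c : ℝ) (hc0 : 0 ≤ c) (hcγ : c ≤ (if ρ₀ ≤ σ then f ρ₀ else f σ)) :
    ∃ u, (u ∈ Icc (0:ℝ) 1 ∧ (ρ₀ ≤ σ → u ∈ insert ρ₀ (Ioc (τ ρ₀) 1)) ∧
        (σ ≤ ρ₀ → u ∈ Icc σ 1) ∧ f u = c) ∧
      ∀ v ∈ Icc (0:ℝ) 1, (ρ₀ ≤ σ → v ∈ insert ρ₀ (Ioc (τ ρ₀) 1)) →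
        (σ ≤ ρ₀ → v ∈ Icc σ 1) → f v = c → v = u := by
  have hanti := stmt4_anti f σ hf_conc hσ hσmax
  by_cases hge : σ ≤ ρ₀
  · have hcσ : c ≤ f σ := by
      split_ifs at hcγ with h
      · rwa [le_antisymm h hge] at hcγ
      · exact hcγ
    have hsub : Icc σ 1 ⊆ Icc (0:ℝ) 1 := Icc_subset_Icc hσ.1.le le_rfl
    obtain ⟨u, hu, hfu⟩ := intermediate_value_Icc' hσ.2.le (hf_cont.mono hsub)
      (⟨hf1 ▸ hc0, hcσ⟩ : c ∈ Icc (f 1) (f σ))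
    refine ⟨u, ⟨hsub hu, ?_, fun _ => hu, hfu⟩, ?_⟩
    · intro hle
      have heq : ρ₀ = σ := le_antisymm hle hge
      subst heq
      rw [hτσ]
      rcases eq_or_lt_of_le hu.1 with h | h
      · exact mem_insert_iff.2 (Or.inl h.symm)
      · exact mem_insert_iff.2 (Or.inr ⟨h, hu.2⟩)
    · intro v _ _ hv2 hfv
      exact hanti.injOn (hv2 hge) hu (hfv.trans hfu.symm)
  · push_neg at hge
    rw [if_pos hge.le] at hcγ
    obtain ⟨hτg, hτ1, hτf⟩ := stmt4_tau_gt f σ τ hf_conc hσ hσmax hτ ρ₀ hρ₀.1 hge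
    by_cases hceq : c = f ρ₀
    · refine ⟨ρ₀, ⟨hρ₀, fun _ => mem_insert _ _, fun h => absurd h (not_le.2 hge), hceq.symm⟩, ?_⟩
      intro v _ hv1 _ hfv
      rcases mem_insert_iff.1 (hv1 hge.le) with h | h
      · exact h
      · have : f v < f (τ ρ₀) := hanti ⟨hτg.le, hτ1⟩ ⟨hτg.le.trans h.1.le, h.2⟩ h.1
        rw [hτf, ← hceq, hfv] at this
        exact absurd this (lt_irrefl _)
    · have hclt : c < f ρ₀ := lt_of_le_of_ne hcγ hceq
      have hsub : Icc (τ ρ₀) 1 ⊆ Icc (0:ℝ) 1 :=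
        Icc_subset_Icc (hσ.1.le.trans hτg.le) le_rfl
      obtain ⟨u, hu, hfu⟩ := intermediate_value_Icc' hτ1 (hf_cont.mono hsub)
        (⟨hf1 ▸ hc0, by rw [hτf]; exact hcγ⟩ : c ∈ Icc (f 1) (f (τ ρ₀)))
      have hune : τ ρ₀ ≠ u := by
        intro h
        rw [← h, hτf] at hfu
        exact hceq hfu.symm
      have huI : u ∈ Ioc (τ ρ₀) 1 := ⟨lt_of_le_of_ne hu.1 hune, hu.2⟩
      refine ⟨u, ⟨hsub hu, fun _ => mem_insert_iff.2 (Or.inr huI),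
        fun h => absurd h (not_le.2 hge), hfu⟩, ?_⟩
      intro v _ hv1 _ hfv
      rcases mem_insert_iff.1 (hv1 hge.le) with h | h
      · rw [h] at hfv
        exact absurd hfv.symm hceq
      · exact hanti.injOn ⟨hτg.le.trans h.1.le, h.2⟩ ⟨hτg.le.trans hu.1, hu.2⟩
          (hfv.trans hfu.symm)

include hf_cont hf_conc hf0 hf1 hσ hσmax hτσ hτ in
lemma stmt4_out_exu (ρ₀ : ℝ) (hρ₀ : ρ₀ ∈ Icc (0:ℝ) 1)
    (c : ℝ) (hc0 : 0 ≤ c) (hcγ : c ≤ (if σ ≤ ρ₀ then f ρ₀ else f σ)) :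
    ∃ u, (u ∈ Icc (0:ℝ) 1 ∧ (ρ₀ ≤ σ → u ∈ Icc 0 σ) ∧
        (σ ≤ ρ₀ → u ∈ insert ρ₀ (Ico 0 (τ ρ₀))) ∧ f u = c) ∧
      ∀ v ∈ Icc (0:ℝ) 1, (ρ₀ ≤ σ → v ∈ Icc 0 σ) →
        (σ ≤ ρ₀ → v ∈ insert ρ₀ (Ico 0 (τ ρ₀))) → f v = c → v = u := by
  have hmono := stmt4_mono f σ hf_conc hσ hσmax
  by_cases hle : ρ₀ ≤ σ
  · have hcσ : c ≤ f σ := by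
      split_ifs at hcγ with h
      · rwa [le_antisymm hle h] at hcγ
      · exact hcγ
    have hsub : Icc (0:ℝ) σ ⊆ Icc (0:ℝ) 1 := Icc_subset_Icc le_rfl hσ.2.le
    obtain ⟨u, hu, hfu⟩ := intermediate_value_Icc hσ.1.le (hf_cont.mono hsub)
      (⟨by rw [hf0]; exact hc0, hcσ⟩ : c ∈ Icc (f 0) (f σ))
    refine ⟨u, ⟨hsub hu, fun _ => hu, ?_, hfu⟩, ?_⟩
    · intro hge
      have heq : ρ₀ = σ := le_antisymm hle hge
      subst heq
      rw [hτσ]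
      rcases eq_or_lt_of_le hu.2 with h | h
      · exact mem_insert_iff.2 (Or.inl h)
      · exact mem_insert_iff.2 (Or.inr ⟨hu.1, h⟩)
    · intro v _ hv1 _ hfv
      exact hmono.injOn (hv1 hle) hu (hfv.trans hfu.symm)
  · push_neg at hle
    rw [if_pos hle.le] at hcγ
    obtain ⟨hτ0, hτl, hτf⟩ := stmt4_tau_lt f σ τ hf_conc hσ hσmax hτ ρ₀ hρ₀.2 hle
    by_cases hceq : c = f ρ₀
    · refine ⟨ρ₀, ⟨hρ₀, fun h => absurd h (not_le.2 hle), fun _ => mem_insert _ _,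
        hceq.symm⟩, ?_⟩
      intro v _ _ hv2 hfv
      rcases mem_insert_iff.1 (hv2 hle.le) with h | h
      · exact h
      · have : f v < f (τ ρ₀) := hmono ⟨h.1, h.2.le.trans hτl.le⟩ ⟨hτ0, hτl.le⟩ h.2
        rw [hτf, ← hceq, hfv] at this
        exact absurd this (lt_irrefl _)
    · have hclt : c < f ρ₀ := lt_of_le_of_ne hcγ hceq
      have hsub : Icc (0:ℝ) (τ ρ₀) ⊆ Icc (0:ℝ) 1 :=
        Icc_subset_Icc le_rfl (hτl.le.trans hσ.2.le)
      obtain ⟨u, hu, hfu⟩ := intermediate_value_Icc hτ0 (hf_cont.mono hsub)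
        (⟨by rw [hf0]; exact hc0, by rw [hτf]; exact hcγ⟩ : c ∈ Icc (f 0) (f (τ ρ₀)))
      have hune : u ≠ τ ρ₀ := by
        intro h
        rw [h, hτf] at hfu
        exact hceq hfu.symm
      have huI : u ∈ Ico 0 (τ ρ₀) := ⟨hu.1, lt_of_le_of_ne hu.2 hune⟩
      refine ⟨u, ⟨hsub hu, fun h => absurd h (not_le.2 hle),
        fun _ => mem_insert_iff.2 (Or.inr huI), hfu⟩, ?_⟩
      intro v _ _ hv2 hfv
      rcases mem_insert_iff.1 (hv2 hle.le) with h | h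
      · rw [h] at hfv
        exact absurd hfv.symm hceq
      · exact hmono.injOn ⟨h.1, h.2.le.trans hτl.le⟩ ⟨hu.1, hu.2.trans hτl.le⟩
          (hfv.trans hfu.symm)
end


lemma stmt4_lp (γ₁ γ₂ γ₃ γ₄ α₁ α₂ : ℝ) (hγ₁ : 0 ≤ γ₁) (hγ₂ : 0 ≤ γ₂)
    (hγ₃ : 0 ≤ γ₃) (hγ₄ : 0 ≤ γ₄)
    (hα₁ : α₁ ∈ Ioo (0:ℝ) 1) (hα₂ : α₂ ∈ Ioo (0:ℝ) 1) (hα : α₁ ≠ α₂) :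
    ∃ c : ℝ × ℝ,
      (0 ≤ c.1 ∧ c.1 ≤ γ₁ ∧ 0 ≤ c.2 ∧ c.2 ≤ γ₂ ∧ α₁*c.1+α₂*c.2 ≤ γ₃ ∧
        (1-α₁)*c.1+(1-α₂)*c.2 ≤ γ₄) ∧
      (∀ d : ℝ×ℝ, 0 ≤ d.1 → d.1 ≤ γ₁ → 0 ≤ d.2 → d.2 ≤ γ₂ → α₁*d.1+α₂*d.2 ≤ γ₃ →
        (1-α₁)*d.1+(1-α₂)*d.2 ≤ γ₄ → d.1 + d.2 ≤ c.1 + c.2) ∧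
      (∀ d : ℝ×ℝ, 0 ≤ d.1 → d.1 ≤ γ₁ → 0 ≤ d.2 → d.2 ≤ γ₂ → α₁*d.1+α₂*d.2 ≤ γ₃ →
        (1-α₁)*d.1+(1-α₂)*d.2 ≤ γ₄ → d.1 + d.2 = c.1 + c.2 → d = c) := by
  set K : Set (ℝ×ℝ) := {d : ℝ×ℝ | 0 ≤ d.1 ∧ d.1 ≤ γ₁ ∧ 0 ≤ d.2 ∧ d.2 ≤ γ₂ ∧
    α₁*d.1+α₂*d.2 ≤ γ₃ ∧ (1-α₁)*d.1+(1-α₂)*d.2 ≤ γ₄} with hKdef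
  have hmemK : ∀ d : ℝ×ℝ, d ∈ K ↔ (0 ≤ d.1 ∧ d.1 ≤ γ₁ ∧ 0 ≤ d.2 ∧ d.2 ≤ γ₂ ∧
      α₁*d.1+α₂*d.2 ≤ γ₃ ∧ (1-α₁)*d.1+(1-α₂)*d.2 ≤ γ₄) := fun d => Iff.rfl
  have hcl : IsClosed K := by
    rw [hKdef]
    have : {d : ℝ×ℝ | 0 ≤ d.1 ∧ d.1 ≤ γ₁ ∧ 0 ≤ d.2 ∧ d.2 ≤ γ₂ ∧
        α₁*d.1+α₂*d.2 ≤ γ₃ ∧ (1-α₁)*d.1+(1-α₂)*d.2 ≤ γ₄} =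
        {d : ℝ×ℝ | 0 ≤ d.1} ∩ ({d : ℝ×ℝ | d.1 ≤ γ₁} ∩ ({d : ℝ×ℝ | 0 ≤ d.2} ∩
        ({d : ℝ×ℝ | d.2 ≤ γ₂} ∩ ({d : ℝ×ℝ | α₁*d.1+α₂*d.2 ≤ γ₃} ∩
        {d : ℝ×ℝ | (1-α₁)*d.1+(1-α₂)*d.2 ≤ γ₄})))) := rfl
    rw [this]
    exact (isClosed_le continuous_const continuous_fst).inter
      ((isClosed_le continuous_fst continuous_const).inter
      ((isClosed_le continuous_const continuous_snd).inter
      ((isClosed_le continuous_snd continuous_const).inter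
      ((isClosed_le (by fun_prop) continuous_const).inter
      (isClosed_le (by fun_prop) continuous_const)))))
  have hcpt : IsCompact K := by
    refine IsCompact.of_isClosed_subset
      ((isCompact_Icc.prod isCompact_Icc) : IsCompact (Icc 0 γ₁ ×ˢ Icc 0 γ₂)) hcl ?_
    intro d hd
    rw [hmemK] at hd
    exact ⟨⟨hd.1, hd.2.1⟩, hd.2.2.1, hd.2.2.2.1⟩
  have h00 : ((0:ℝ),(0:ℝ)) ∈ K := by
    rw [hmemK]
    refine ⟨le_refl _, hγ₁, le_refl _, hγ₂, by simpa using hγ₃, by simpa using hγ₄⟩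
  obtain ⟨c, hcK, hcmax⟩ := hcpt.exists_isMaxOn ⟨((0:ℝ),(0:ℝ)), h00⟩
    ((Continuous.continuousOn (by fun_prop) : ContinuousOn (fun d : ℝ×ℝ => d.1 + d.2) K))
  have hcK' := (hmemK c).1 hcK
  refine ⟨c, hcK', fun d h1 h2 h3 h4 h5 h6 => hcmax ((hmemK d).2 ⟨h1,h2,h3,h4,h5,h6⟩), ?_⟩
  intro d h1 h2 h3 h4 h5 h6 heq
  by_contra hne0
  have hne1 : d.1 ≠ c.1 := fun h => hne0 (Prod.ext_iff.2 ⟨h, by linarith⟩)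
  have hAne : α₁*d.1+α₂*d.2 ≠ α₁*c.1+α₂*c.2 := by
    intro h
    apply hne1
    have h2' : (α₁-α₂)*d.1 = (α₁-α₂)*c.1 := by linear_combination h - α₂ * heq
    exact mul_left_cancel₀ (sub_ne_zero.2 hα) h2'
  have hBne : (1-α₁)*d.1+(1-α₂)*d.2 ≠ (1-α₁)*c.1+(1-α₂)*c.2 := by
    intro h
    apply hne1
    have h2' : (α₂-α₁)*d.1 = (α₂-α₁)*c.1 := by linear_combination h - (1-α₂) * heq
    exact mul_left_cancel₀ (sub_ne_zero.2 (Ne.symm hα)) h2'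
  have hne2 : d.2 ≠ c.2 := fun h => hne1 (by linarith)
  have hm1 : (d.1+c.1)/2 < γ₁ := by
    rcases lt_or_gt_of_ne hne1 with h|h <;> linarith [hcK'.2.1]
  have hm2 : (d.2+c.2)/2 < γ₂ := by
    rcases lt_or_gt_of_ne hne2 with h|h <;> linarith [hcK'.2.2.2.1]
  have hm3 : α₁*((d.1+c.1)/2)+α₂*((d.2+c.2)/2) < γ₃ := by
    rcases lt_or_gt_of_ne hAne with h|h <;> linarith [hcK'.2.2.2.2.1]
  have hm4 : (1-α₁)*((d.1+c.1)/2)+(1-α₂)*((d.2+c.2)/2) < γ₄ := by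
    rcases lt_or_gt_of_ne hBne with h|h <;> linarith [hcK'.2.2.2.2.2]
  set ε := min (min (γ₁ - (d.1+c.1)/2) (γ₂ - (d.2+c.2)/2))
    (min ((γ₃ - (α₁*((d.1+c.1)/2)+α₂*((d.2+c.2)/2)))/(α₁+α₂))
      ((γ₄ - ((1-α₁)*((d.1+c.1)/2)+(1-α₂)*((d.2+c.2)/2)))/((1-α₁)+(1-α₂)))) with hεdef
  have hd1 : 0 < α₁ + α₂ := by linarith [hα₁.1, hα₂.1]
  have hd2 : 0 < (1-α₁) + (1-α₂) := by linarith [hα₁.2, hα₂.2]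
  have hεpos : 0 < ε := lt_min (lt_min (by linarith) (by linarith))
    (lt_min (div_pos (by linarith) hd1) (div_pos (by linarith) hd2))
  have e1 : ε ≤ γ₁ - (d.1+c.1)/2 := (min_le_left _ _).trans (min_le_left _ _)
  have e2 : ε ≤ γ₂ - (d.2+c.2)/2 := (min_le_left _ _).trans (min_le_right _ _)
  have e3 : ε ≤ (γ₃ - (α₁*((d.1+c.1)/2)+α₂*((d.2+c.2)/2)))/(α₁+α₂) :=
    (min_le_right _ _).trans (min_le_left _ _)
  have e4 : ε ≤ (γ₄ - ((1-α₁)*((d.1+c.1)/2)+(1-α₂)*((d.2+c.2)/2)))/((1-α₁)+(1-α₂)) :=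
    (min_le_right _ _).trans (min_le_right _ _)
  have e3' : ε * (α₁+α₂) ≤ γ₃ - (α₁*((d.1+c.1)/2)+α₂*((d.2+c.2)/2)) :=
    (le_div_iff₀ hd1).mp e3
  have e4' : ε * ((1-α₁)+(1-α₂)) ≤ γ₄ - ((1-α₁)*((d.1+c.1)/2)+(1-α₂)*((d.2+c.2)/2)) :=
    (le_div_iff₀ hd2).mp e4
  have hmem : ((d.1+c.1)/2 + ε, (d.2+c.2)/2 + ε) ∈ K := by
    rw [hmemK]
    refine ⟨by linarith, by linarith, by linarith, by linarith, ?_, ?_⟩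
    · show α₁*((d.1+c.1)/2 + ε) + α₂*((d.2+c.2)/2 + ε) ≤ γ₃
      nlinarith [e3']
    · show (1-α₁)*((d.1+c.1)/2 + ε) + (1-α₂)*((d.2+c.2)/2 + ε) ≤ γ₄
      nlinarith [e4']
  have hfin : (d.1+c.1)/2 + ε + ((d.2+c.2)/2 + ε) ≤ c.1 + c.2 := hcmax hmem
  linarith


/-- Existence and uniqueness (Theorem 3.1) of the boundary states produced by
the Riemann solver at a junction with two incoming roads (indices 1,2) and two
outgoing roads (indices 3,4): there is exactly one admissible 4-tuple
maximizing the total flux. -/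
theorem stmt4 (f : ℝ → ℝ) (σ : ℝ) (τ : ℝ → ℝ)
    (hf_cont : ContinuousOn f (Icc 0 1))
    (hf_conc : StrictConcaveOn ℝ (Icc 0 1) f)
    (hf0 : f 0 = 0) (hf1 : f 1 = 0)
    (hσ : σ ∈ Ioo (0 : ℝ) 1)
    (hσmax : ∀ x ∈ Icc (0 : ℝ) 1, f x ≤ f σ)
    (hτσ : τ σ = σ)
    (hτ : ∀ ρ ∈ Icc (0 : ℝ) 1, ρ ≠ σ →
      τ ρ ∈ Icc (0 : ℝ) 1 ∧ τ ρ ≠ ρ ∧ f (τ ρ) = f ρ)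
    (α₁ α₂ : ℝ) (hα₁ : α₁ ∈ Ioo (0 : ℝ) 1) (hα₂ : α₂ ∈ Ioo (0 : ℝ) 1)
    (hα : α₁ ≠ α₂)
    (ρ₁₀ ρ₂₀ ρ₃₀ ρ₄₀ : ℝ)
    (h₁₀ : ρ₁₀ ∈ Icc (0 : ℝ) 1) (h₂₀ : ρ₂₀ ∈ Icc (0 : ℝ) 1)
    (h₃₀ : ρ₃₀ ∈ Icc (0 : ℝ) 1) (h₄₀ : ρ₄₀ ∈ Icc (0 : ℝ) 1)
    (D : Set (ℝ × ℝ × ℝ × ℝ))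
    (hD : D = {p | p.1 ∈ Icc (0 : ℝ) 1 ∧ p.2.1 ∈ Icc (0 : ℝ) 1 ∧
      p.2.2.1 ∈ Icc (0 : ℝ) 1 ∧ p.2.2.2 ∈ Icc (0 : ℝ) 1 ∧
      (ρ₁₀ ≤ σ → p.1 ∈ insert ρ₁₀ (Ioc (τ ρ₁₀) 1)) ∧
      (σ ≤ ρ₁₀ → p.1 ∈ Icc σ 1) ∧
      (ρ₂₀ ≤ σ → p.2.1 ∈ insert ρ₂₀ (Ioc (τ ρ₂₀) 1)) ∧
      (σ ≤ ρ₂₀ → p.2.1 ∈ Icc σ 1) ∧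
      (ρ₃₀ ≤ σ → p.2.2.1 ∈ Icc 0 σ) ∧
      (σ ≤ ρ₃₀ → p.2.2.1 ∈ insert ρ₃₀ (Ico 0 (τ ρ₃₀))) ∧
      (ρ₄₀ ≤ σ → p.2.2.2 ∈ Icc 0 σ) ∧
      (σ ≤ ρ₄₀ → p.2.2.2 ∈ insert ρ₄₀ (Ico 0 (τ ρ₄₀))) ∧
      f p.2.2.1 = α₁ * f p.1 + α₂ * f p.2.1 ∧
      f p.2.2.2 = (1 - α₁) * f p.1 + (1 - α₂) * f p.2.1}) :
    ∃! p, p ∈ D ∧ ∀ q ∈ D,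
      f q.1 + f q.2.1 + f q.2.2.1 + f q.2.2.2 ≤
        f p.1 + f p.2.1 + f p.2.2.1 + f p.2.2.2 := by
  have hσI : σ ∈ Icc (0:ℝ) 1 := ⟨hσ.1.le, hσ.2.le⟩
  have hγ₁0 : 0 ≤ (if ρ₁₀ ≤ σ then f ρ₁₀ else f σ) := by
    split_ifs
    · exact stmt4_nonneg f hf_conc hf0 hf1 ρ₁₀ h₁₀
    · exact stmt4_nonneg f hf_conc hf0 hf1 σ hσI
  have hγ₂0 : 0 ≤ (if ρ₂₀ ≤ σ then f ρ₂₀ else f σ) := by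
    split_ifs
    · exact stmt4_nonneg f hf_conc hf0 hf1 ρ₂₀ h₂₀
    · exact stmt4_nonneg f hf_conc hf0 hf1 σ hσI
  have hγ₃0 : 0 ≤ (if σ ≤ ρ₃₀ then f ρ₃₀ else f σ) := by
    split_ifs
    · exact stmt4_nonneg f hf_conc hf0 hf1 ρ₃₀ h₃₀
    · exact stmt4_nonneg f hf_conc hf0 hf1 σ hσI
  have hγ₄0 : 0 ≤ (if σ ≤ ρ₄₀ then f ρ₄₀ else f σ) := by
    split_ifs
    · exact stmt4_nonneg f hf_conc hf0 hf1 ρ₄₀ h₄₀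
    · exact stmt4_nonneg f hf_conc hf0 hf1 σ hσI
  obtain ⟨c, ⟨hc1, hc2, hc3, hc4, hc5, hc6⟩, hcmax, hcuniq⟩ :=
    stmt4_lp _ _ _ _ α₁ α₂ hγ₁0 hγ₂0 hγ₃0 hγ₄0 hα₁ hα₂ hα
  obtain ⟨u₁, ⟨hu₁I, hu₁a, hu₁b, hfu₁⟩, huq₁⟩ :=
    stmt4_inc_exu f σ τ hf_cont hf_conc hf0 hf1 hσ hσmax hτσ hτ ρ₁₀ h₁₀ c.1 hc1 hc2
  obtain ⟨u₂, ⟨hu₂I, hu₂a, hu₂b, hfu₂⟩, huq₂⟩ :=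
    stmt4_inc_exu f σ τ hf_cont hf_conc hf0 hf1 hσ hσmax hτσ hτ ρ₂₀ h₂₀ c.2 hc3 hc4
  have hc30 : 0 ≤ α₁*c.1+α₂*c.2 :=
    add_nonneg (mul_nonneg hα₁.1.le hc1) (mul_nonneg hα₂.1.le hc3)
  have hc40 : 0 ≤ (1-α₁)*c.1+(1-α₂)*c.2 :=
    add_nonneg (mul_nonneg (by linarith [hα₁.2]) hc1) (mul_nonneg (by linarith [hα₂.2]) hc3)
  obtain ⟨u₃, ⟨hu₃I, hu₃a, hu₃b, hfu₃⟩, huq₃⟩ :=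
    stmt4_out_exu f σ τ hf_cont hf_conc hf0 hf1 hσ hσmax hτσ hτ ρ₃₀ h₃₀ (α₁*c.1+α₂*c.2) hc30 hc5
  obtain ⟨u₄, ⟨hu₄I, hu₄a, hu₄b, hfu₄⟩, huq₄⟩ :=
    stmt4_out_exu f σ τ hf_cont hf_conc hf0 hf1 hσ hσmax hτσ hτ ρ₄₀ h₄₀
      ((1-α₁)*c.1+(1-α₂)*c.2) hc40 hc6
  have hpD : (u₁,u₂,u₃,u₄) ∈ D := by
    rw [hD]
    exact ⟨hu₁I, hu₂I, hu₃I, hu₄I, hu₁a, hu₁b, hu₂a, hu₂b, hu₃a, hu₃b, hu₄a, hu₄b,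
      by rw [hfu₃, hfu₁, hfu₂], by rw [hfu₄, hfu₁, hfu₂]⟩
  have hmax : ∀ q ∈ D, f q.1 + f q.2.1 + f q.2.2.1 + f q.2.2.2 ≤
      f u₁ + f u₂ + f u₃ + f u₄ := by
    intro q hq
    rw [hD] at hq
    obtain ⟨hq1, hq2, hq3, hq4, hi1a, hi1b, hi2a, hi2b, ho3a, ho3b, ho4a, ho4b, he3, he4⟩ := hq
    have hb1 := stmt4_inc_bound f σ τ hf_conc hf0 hf1 hσ hσmax hτσ hτ ρ₁₀ h₁₀ q.1 hq1 hi1a hi1b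
    have hb2 := stmt4_inc_bound f σ τ hf_conc hf0 hf1 hσ hσmax hτσ hτ ρ₂₀ h₂₀ q.2.1 hq2 hi2a hi2b
    have hb3 := stmt4_out_bound f σ τ hf_conc hf0 hf1 hσ hσmax hτσ hτ ρ₃₀ h₃₀ q.2.2.1 hq3 ho3a ho3b
    have hb4 := stmt4_out_bound f σ τ hf_conc hf0 hf1 hσ hσmax hτσ hτ ρ₄₀ h₄₀ q.2.2.2 hq4 ho4a ho4b
    have hle' : f q.1 + f q.2.1 ≤ c.1 + c.2 :=
      hcmax (f q.1, f q.2.1) hb1.1 hb1.2 hb2.1 hb2.2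
        (by rw [← he3]; exact hb3.2) (by rw [← he4]; exact hb4.2)
    rw [he3, he4, hfu₁, hfu₂, hfu₃, hfu₄]
    nlinarith [hle']
  refine ⟨(u₁,u₂,u₃,u₄), ⟨hpD, hmax⟩, ?_⟩
  intro q hq'
  obtain ⟨hqD, hqmax⟩ := hq'
  have hq := hqD
  rw [hD] at hq
  obtain ⟨hq1, hq2, hq3, hq4, hi1a, hi1b, hi2a, hi2b, ho3a, ho3b, ho4a, ho4b, he3, he4⟩ := hq
  have hb1 := stmt4_inc_bound f σ τ hf_conc hf0 hf1 hσ hσmax hτσ hτ ρ₁₀ h₁₀ q.1 hq1 hi1a hi1b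
  have hb2 := stmt4_inc_bound f σ τ hf_conc hf0 hf1 hσ hσmax hτσ hτ ρ₂₀ h₂₀ q.2.1 hq2 hi2a hi2b
  have hb3 := stmt4_out_bound f σ τ hf_conc hf0 hf1 hσ hσmax hτσ hτ ρ₃₀ h₃₀ q.2.2.1 hq3 ho3a ho3b
  have hb4 := stmt4_out_bound f σ τ hf_conc hf0 hf1 hσ hσmax hτσ hτ ρ₄₀ h₄₀ q.2.2.2 hq4 ho4a ho4b
  have h1' : f u₁ + f u₂ + f u₃ + f u₄ ≤ f q.1 + f q.2.1 + f q.2.2.1 + f q.2.2.2 :=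
    hqmax (u₁,u₂,u₃,u₄) hpD
  have h2' := hmax q hqD
  have heqsum : f q.1 + f q.2.1 = c.1 + c.2 := by
    have e1 : f q.1 + f q.2.1 + f q.2.2.1 + f q.2.2.2 = 2*(f q.1 + f q.2.1) := by
      rw [he3, he4]; ring
    have e2 : f u₁ + f u₂ + f u₃ + f u₄ = 2*(c.1 + c.2) := by
      rw [hfu₁, hfu₂, hfu₃, hfu₄]; ring
    linarith
  have hdc : (f q.1, f q.2.1) = c :=
    hcuniq (f q.1, f q.2.1) hb1.1 hb1.2 hb2.1 hb2.2
      (by rw [← he3]; exact hb3.2) (by rw [← he4]; exact hb4.2) heqsum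
  have hd1 : f q.1 = c.1 := congrArg Prod.fst hdc
  have hd2 : f q.2.1 = c.2 := congrArg Prod.snd hdc
  have e1 := huq₁ q.1 hq1 hi1a hi1b hd1
  have e2 := huq₂ q.2.1 hq2 hi2a hi2b hd2
  have e3 := huq₃ q.2.2.1 hq3 ho3a ho3b (by rw [he3, hd1, hd2])
  have e4 := huq₄ q.2.2.2 hq4 ho4a ho4b (by rw [he4, hd1, hd2])
  exact Prod.ext_iff.2 ⟨e1, Prod.ext_iff.2 ⟨e2, Prod.ext_iff.2 ⟨e3, e4⟩⟩⟩
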